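/- Let $\gamma \in (0,1)$. There is a constant $C > 0$ such that for every integer $n \ge 1$, $\bigl| \int_0^{\pi} s^{\gamma-1} e^{ins}\, ds \;-\; n^{-\gamma}\, e^{i\pi\gamma/2}\, \Gamma(\gamma) \bigr| \le C / n$. -/

import Mathlib

open MeasureTheory Complex Real

open Set Filter

noncomputable def fosc (γ : ℝ) (n : ℕ) (z : ℂ) : ℂ :=
  z ^ ((γ : ℂ) - 1) * Complex.exp (Complex.I * n * z)

lemma norm_fosc (γ : ℝ) (n : ℕ) {z : ℂ} (hz : z ≠ 0) :
    ‖fosc γ n z‖ = ‖z‖ ^ (γ - 1) * Real.exp (-(n * z.im)) := by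
  rw [fosc, norm_mul,
    Complex.norm_cpow_of_ne_zero hz, Complex.norm_exp]
  have h1 : ((γ : ℂ) - 1).im = 0 := by simp
  have h2 : ((γ : ℂ) - 1).re = γ - 1 := by simp
  have h3 : (Complex.I * n * z).re = -(n * z.im) := by simp [Complex.mul_re, Complex.mul_im]
  rw [h1, h2, h3, mul_zero, Real.exp_zero, div_one]

lemma continuousAt_fosc (γ : ℝ) (n : ℕ) {z : ℂ} (hz : z ∈ Complex.slitPlane) :
    ContinuousAt (fosc γ n) z := by
  apply (_root_.continuousAt_cpow_const hz).mul
  exact (Complex.continuous_exp.comp ((continuous_const.mul continuous_id))).continuousAt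

lemma differentiableAt_fosc (γ : ℝ) (n : ℕ) {z : ℂ} (hz : z ∈ Complex.slitPlane) :
    DifferentiableAt ℂ (fosc γ n) z := by
  apply ((hasDerivAt_id z).cpow_const hz).differentiableAt.mul
  exact (((differentiable_const _).mul differentiable_id).cexp ).differentiableAt

lemma norm_fosc_real (γ : ℝ) (n : ℕ) {s : ℝ} (hs : 0 < s) :
    ‖fosc γ n s‖ = s ^ (γ - 1) := by
  rw [norm_fosc γ n (by exact_mod_cast hs.ne' : (s : ℂ) ≠ 0)]
  simp [Complex.norm_real, abs_of_pos hs]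

lemma integrableOn_fosc (γ : ℝ) (hγ : γ ∈ Set.Ioo (0:ℝ) 1) (n : ℕ) {b : ℝ} (hb : 0 < b) :
    IntegrableOn (fun s : ℝ => fosc γ n s) (Set.Ioc 0 b) := by
  have hint : IntegrableOn (fun s : ℝ => s ^ (γ - 1)) (Set.Ioc 0 b) := by
    rw [← intervalIntegrable_iff_integrableOn_Ioc_of_le hb.le]
    exact intervalIntegral.intervalIntegrable_rpow' (by linarith [hγ.1])
  refine hint.integrable.mono' ?_ ?_
  · refine (ContinuousOn.aestronglyMeasurable ?_ measurableSet_Ioc)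
    intro s hs
    exact ((continuousAt_fosc γ n (by simp [Complex.mem_slitPlane_iff, hs.1])).comp
      Complex.continuous_ofReal.continuousAt).continuousWithinAt
  · filter_upwards [ae_restrict_mem measurableSet_Ioc] with s hs
    rw [norm_fosc_real γ n hs.1]

lemma rect_fosc (γ : ℝ) (n : ℕ) {ε R : ℝ} (hε : 0 < ε) (hεπ : ε ≤ π) (hR : 0 < R) :
    (∫ x : ℝ in ε..π, fosc γ n x) - (∫ x : ℝ in ε..π, fosc γ n (x + R * Complex.I)) +
      Complex.I • (∫ y : ℝ in (0:ℝ)..R, fosc γ n (π + y * Complex.I)) -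
      Complex.I • (∫ y : ℝ in (0:ℝ)..R, fosc γ n (ε + y * Complex.I)) = 0 := by
  have := Complex.integral_boundary_rect_eq_zero_of_differentiableOn (fosc γ n)
    (ε : ℂ) ((π : ℂ) + R * Complex.I) ?_
  · simpa using this
  · intro z hz
    rw [Complex.mem_reProdIm] at hz
    refine (differentiableAt_fosc γ n ?_).differentiableWithinAt
    rw [Complex.mem_slitPlane_iff]
    left
    have h1 : ((ε:ℂ)).re = ε := by simp
    have h2 : ((π:ℂ) + R * Complex.I).re = π := by simp
    rw [h1, h2] at hz
    have := hz.1
    rw [Set.uIcc_of_le hεπ] at this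
    exact lt_of_lt_of_le hε this.1

lemma tendsto_small (γ : ℝ) (hγ : γ ∈ Set.Ioo (0:ℝ) 1) (n : ℕ) :
    Tendsto (fun ε : ℝ => ∫ x in (0:ℝ)..ε, fosc γ n x) (nhdsWithin 0 (Set.Ioi 0)) (nhds 0) := by
  apply squeeze_zero_norm' (a := fun ε : ℝ => ε ^ γ / γ)
  · filter_upwards [self_mem_nhdsWithin] with ε hε
    have hε' : (0:ℝ) < ε := hε
    have step1 : ‖∫ x in (0:ℝ)..ε, fosc γ n x‖ ≤ |∫ x in (0:ℝ)..ε, x ^ (γ - 1)| := by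
      apply intervalIntegral.norm_integral_le_abs_of_norm_le
      · filter_upwards [ae_restrict_mem measurableSet_uIoc] with s hs
        rw [Set.uIoc_of_le hε'.le] at hs
        rw [norm_fosc_real γ n hs.1]
      · exact intervalIntegral.intervalIntegrable_rpow' (by linarith [hγ.1])
    refine step1.trans ?_
    rw [integral_rpow (Or.inl (by linarith [hγ.1]))]
    rw [sub_add_cancel, Real.zero_rpow hγ.1.ne', sub_zero]
    rw [_root_.abs_of_nonneg (div_nonneg (Real.rpow_nonneg hε'.le γ) hγ.1.le)]
  · have h1 : Tendsto (fun ε : ℝ => ε ^ γ) (nhdsWithin 0 (Set.Ioi 0)) (nhds 0) := by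
      have := (Real.continuousAt_rpow_const 0 γ (Or.inr hγ.1.le)).tendsto
      rw [Real.zero_rpow hγ.1.ne'] at this
      exact this.mono_left nhdsWithin_le_nhds
    simpa using h1.div_const γ

lemma tendsto_bottom (γ : ℝ) (hγ : γ ∈ Set.Ioo (0:ℝ) 1) (n : ℕ) :
    Tendsto (fun ε : ℝ => ∫ x in ε..π, fosc γ n x) (nhdsWithin 0 (Set.Ioi 0))
      (nhds (∫ x in (0:ℝ)..π, fosc γ n x)) := by
  have key : ∀ ε ∈ Set.Ioo (0:ℝ) π,
      (∫ x in ε..π, fosc γ n x) =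
        (∫ x in (0:ℝ)..π, fosc γ n x) - ∫ x in (0:ℝ)..ε, fosc γ n x := by
    intro ε hε
    have h1 : IntervalIntegrable (fun x : ℝ => fosc γ n x) volume 0 ε :=
      (intervalIntegrable_iff_integrableOn_Ioc_of_le hε.1.le).2 (integrableOn_fosc γ hγ n hε.1)
    have h2 : IntervalIntegrable (fun x : ℝ => fosc γ n x) volume ε π :=
      (intervalIntegrable_iff_integrableOn_Ioc_of_le hε.2.le).2
        (((integrableOn_fosc γ hγ n Real.pi_pos)).mono_set (Set.Ioc_subset_Ioc_left hε.1.le))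
    have := intervalIntegral.integral_add_adjacent_intervals h1 h2
    linear_combination this
  have hmem : Set.Ioo (0:ℝ) π ∈ nhdsWithin (0:ℝ) (Set.Ioi 0) :=
    Ioo_mem_nhdsGT_of_mem ⟨le_refl 0, Real.pi_pos⟩
  have := (tendsto_const_nhds (x := ∫ x in (0:ℝ)..π, fosc γ n x)
    (f := nhdsWithin (0:ℝ) (Set.Ioi 0))).sub (tendsto_small γ hγ n)
  rw [sub_zero] at this
  refine this.congr' ?_
  filter_upwards [hmem] with ε hε
  exact (key ε hε).symm

lemma continuous_fosc_horiz (γ : ℝ) (n : ℕ) {R : ℝ} (hR : 0 < R) :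
    Continuous (fun x : ℝ => fosc γ n (x + R * Complex.I)) := by
  rw [continuous_iff_continuousAt]
  intro x
  have hbase : Continuous (fun x : ℝ => (x : ℂ) + R * Complex.I) :=
    Complex.continuous_ofReal.add continuous_const
  refine (continuousAt_fosc γ n ?_).comp hbase.continuousAt
  rw [Complex.mem_slitPlane_iff]
  right
  simp [hR.ne']

lemma tendsto_top (γ : ℝ) (n : ℕ) {R : ℝ} (hR : 0 < R) :
    Tendsto (fun ε : ℝ => ∫ x in ε..π, fosc γ n (x + R * Complex.I))
      (nhdsWithin 0 (Set.Ioi 0))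
      (nhds (∫ x in (0:ℝ)..π, fosc γ n (x + R * Complex.I))) := by
  have hcont : Continuous (fun ε : ℝ => ∫ x in ε..π, fosc γ n (x + R * Complex.I)) := by
    have h1 : Continuous (fun ε : ℝ => ∫ x in π..ε, fosc γ n (x + R * Complex.I)) :=
      intervalIntegral.continuous_primitive
        (fun a b => ((continuous_fosc_horiz γ n hR)).intervalIntegrable a b) π
    have : (fun ε : ℝ => ∫ x in ε..π, fosc γ n (x + R * Complex.I)) =
        fun ε : ℝ => -∫ x in π..ε, fosc γ n (x + R * Complex.I) := by
      funext ε; rw [intervalIntegral.integral_symm]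
    rw [this]
    exact h1.neg
  exact (hcont.tendsto 0).mono_left nhdsWithin_le_nhds

lemma tendsto_left (γ : ℝ) (hγ : γ ∈ Set.Ioo (0:ℝ) 1) (n : ℕ) {R : ℝ} (hR : 0 < R) :
    Tendsto (fun ε : ℝ => ∫ y in (0:ℝ)..R, fosc γ n (ε + y * Complex.I))
      (nhdsWithin 0 (Set.Ioi 0))
      (nhds (∫ y in (0:ℝ)..R, fosc γ n (y * Complex.I))) := by
  apply intervalIntegral.tendsto_integral_filter_of_dominated_convergence
    (bound := fun y : ℝ => y ^ (γ - 1))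
  · filter_upwards [self_mem_nhdsWithin] with ε hε
    have hε' : (0:ℝ) < ε := hε
    apply Continuous.aestronglyMeasurable
    rw [continuous_iff_continuousAt]
    intro y
    have hbase : Continuous (fun y : ℝ => (ε : ℂ) + y * Complex.I) :=
      continuous_const.add (Complex.continuous_ofReal.mul continuous_const)
    refine (continuousAt_fosc γ n ?_).comp hbase.continuousAt
    rw [Complex.mem_slitPlane_iff]
    left
    simpa using hε'
  · filter_upwards [self_mem_nhdsWithin] with ε hε
    have hε' : (0:ℝ) < ε := hε
    refine Filter.Eventually.of_forall (fun y hy => ?_)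
    rw [Set.uIoc_of_le hR.le] at hy
    have hz : ((ε : ℂ) + y * Complex.I) ≠ 0 := by
      intro h
      have : ((ε : ℂ) + y * Complex.I).re = 0 := by rw [h]; simp
      simp at this
      exact hε'.ne' this
    rw [norm_fosc γ n hz]
    have him : ((ε : ℂ) + y * Complex.I).im = y := by simp
    have habs : y ≤ ‖(ε : ℂ) + y * Complex.I‖ := by
      calc y = |((ε : ℂ) + y * Complex.I).im| := by rw [him, abs_of_pos hy.1]
      _ ≤ _ := Complex.abs_im_le_norm _
    calc ‖(ε : ℂ) + y * Complex.I‖ ^ (γ - 1) *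
          Real.exp (-(n * ((ε : ℂ) + y * Complex.I).im))
        ≤ y ^ (γ - 1) * 1 := by
          apply mul_le_mul
          · exact Real.rpow_le_rpow_of_nonpos hy.1 habs (by linarith [hγ.2])
          · rw [Real.exp_le_one_iff, him]
            have : (0:ℝ) ≤ (n : ℝ) * y := mul_nonneg (Nat.cast_nonneg n) hy.1.le
            linarith
          · positivity
          · exact Real.rpow_nonneg hy.1.le _
      _ = y ^ (γ - 1) := mul_one _
  · exact intervalIntegral.intervalIntegrable_rpow' (by linarith [hγ.1])
  · refine Filter.Eventually.of_forall (fun y hy => ?_)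
    rw [Set.uIoc_of_le hR.le] at hy
    have hslit : (y : ℂ) * Complex.I ∈ Complex.slitPlane := by
      rw [Complex.mem_slitPlane_iff]
      right
      simpa using hy.1.ne'
    have hbase : Tendsto (fun ε : ℝ => (ε : ℂ) + y * Complex.I) (nhdsWithin 0 (Set.Ioi 0))
        (nhds ((y : ℂ) * Complex.I)) := by
      have : Tendsto (fun ε : ℝ => (ε : ℂ) + y * Complex.I) (nhds 0)
          (nhds ((0 : ℂ) + y * Complex.I)) :=
        ((Complex.continuous_ofReal.add continuous_const).tendsto 0)
      rw [zero_add] at this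
      exact this.mono_left nhdsWithin_le_nhds
    exact ((continuousAt_fosc γ n hslit).tendsto).comp hbase

lemma rect_limit (γ : ℝ) (hγ : γ ∈ Set.Ioo (0:ℝ) 1) (n : ℕ) {R : ℝ} (hR : 0 < R) :
    (∫ x in (0:ℝ)..π, fosc γ n x) - (∫ x in (0:ℝ)..π, fosc γ n (x + R * Complex.I)) +
      Complex.I • (∫ y in (0:ℝ)..R, fosc γ n (π + y * Complex.I)) -
      Complex.I • (∫ y in (0:ℝ)..R, fosc γ n (y * Complex.I)) = 0 := by
  have h1 : Tendsto (fun ε : ℝ =>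
      (∫ x in ε..π, fosc γ n x) - (∫ x in ε..π, fosc γ n (x + R * Complex.I)) +
        Complex.I • (∫ y in (0:ℝ)..R, fosc γ n (π + y * Complex.I)) -
        Complex.I • (∫ y in (0:ℝ)..R, fosc γ n (ε + y * Complex.I)))
      (nhdsWithin 0 (Set.Ioi 0))
      (nhds ((∫ x in (0:ℝ)..π, fosc γ n x) - (∫ x in (0:ℝ)..π, fosc γ n (x + R * Complex.I)) +
        Complex.I • (∫ y in (0:ℝ)..R, fosc γ n (π + y * Complex.I)) -
        Complex.I • (∫ y in (0:ℝ)..R, fosc γ n (y * Complex.I)))) := by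
    exact (((tendsto_bottom γ hγ n).sub (tendsto_top γ n hR)).add tendsto_const_nhds).sub
      ((tendsto_left γ hγ n hR).const_smul Complex.I)
  have h2 : Tendsto (fun ε : ℝ =>
      (∫ x in ε..π, fosc γ n x) - (∫ x in ε..π, fosc γ n (x + R * Complex.I)) +
        Complex.I • (∫ y in (0:ℝ)..R, fosc γ n (π + y * Complex.I)) -
        Complex.I • (∫ y in (0:ℝ)..R, fosc γ n (ε + y * Complex.I)))
      (nhdsWithin 0 (Set.Ioi 0)) (nhds 0) := by
    refine tendsto_const_nhds.congr' ?_
    filter_upwards [Ioo_mem_nhdsGT_of_mem ⟨le_refl (0:ℝ), Real.pi_pos⟩] with ε hε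
    exact (rect_fosc γ n hε.1 hε.2.le hR).symm
  exact tendsto_nhds_unique h1 h2

lemma fosc_imag (γ : ℝ) (hγ : γ ∈ Set.Ioo (0:ℝ) 1) (n : ℕ) {y : ℝ} (hy : 0 < y) :
    Complex.I * fosc γ n (y * Complex.I) =
      Complex.exp (Complex.I * π * γ / 2) *
        ((y ^ (γ - 1) * Real.exp (-(n * y)) : ℝ) : ℂ) := by
  have hyC : ((y : ℂ)) ≠ 0 := by exact_mod_cast hy.ne'
  have hzne : (y : ℂ) * Complex.I ≠ 0 := mul_ne_zero hyC Complex.I_ne_zero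
  rw [fosc]
  have hlog : Complex.log ((y : ℂ) * Complex.I) = (Real.log y : ℂ) + π / 2 * Complex.I := by
    rw [Complex.log_ofReal_mul hy Complex.I_ne_zero, Complex.log_I]
  have hcpow : ((y : ℂ) * Complex.I) ^ ((γ : ℂ) - 1) =
      ((y ^ (γ - 1) : ℝ) : ℂ) * Complex.exp (Complex.I * π * (γ - 1) / 2) := by
    rw [Complex.cpow_def_of_ne_zero hzne, hlog, add_mul, Complex.exp_add]
    congr 1
    · rw [Complex.ofReal_cpow hy.le, Complex.cpow_def_of_ne_zero hyC,
        ← Complex.ofReal_log hy.le]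
      push_cast
      ring_nf
    · congr 1
      push_cast
      ring
  have hexp : Complex.exp (Complex.I * n * ((y : ℂ) * Complex.I)) =
      ((Real.exp (-(n * y)) : ℝ) : ℂ) := by
    have : Complex.I * n * ((y : ℂ) * Complex.I) = ((-(n * y) : ℝ) : ℂ) := by
      push_cast
      linear_combination (n:ℂ) * y * Complex.I_sq
    rw [this, Complex.ofReal_exp]
  rw [hcpow, hexp]
  have hI : Complex.I = Complex.exp (Complex.I * π / 2) := by
    rw [show Complex.I * π / 2 = (π/2 : ℝ) * Complex.I by push_cast; ring,
      Complex.exp_mul_I]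
    simp
  calc Complex.I * (((y ^ (γ - 1) : ℝ) : ℂ) * Complex.exp (Complex.I * π * (γ - 1) / 2) *
        ((Real.exp (-(n * y)) : ℝ) : ℂ))
      = (Complex.exp (Complex.I * π / 2) * Complex.exp (Complex.I * π * (γ - 1) / 2)) *
        (((y ^ (γ - 1) : ℝ) : ℂ) * ((Real.exp (-(n * y)) : ℝ) : ℂ)) := by
        rw [← hI]; ring
    _ = Complex.exp (Complex.I * π * γ / 2) *
        ((y ^ (γ - 1) * Real.exp (-(n * y)) : ℝ) : ℂ) := by
        rw [← Complex.exp_add, Complex.ofReal_mul]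
        congr 1
        ring

lemma left_integral_eq (γ : ℝ) (hγ : γ ∈ Set.Ioo (0:ℝ) 1) (n : ℕ) {R : ℝ} (hR : 0 < R) :
    Complex.I • (∫ y in (0:ℝ)..R, fosc γ n (y * Complex.I)) =
      Complex.exp (Complex.I * π * γ / 2) *
        ((∫ y in (0:ℝ)..R, y ^ (γ - 1) * Real.exp (-(n * y)) : ℝ) : ℂ) := by
  have key : (∫ y in (0:ℝ)..R, Complex.I * fosc γ n (y * Complex.I)) =
      ∫ y in (0:ℝ)..R, Complex.exp (Complex.I * π * γ / 2) *
        ((y ^ (γ - 1) * Real.exp (-(n * y)) : ℝ) : ℂ) := by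
    apply intervalIntegral.integral_congr
    intro y hy
    rw [Set.uIcc_of_le hR.le] at hy
    rcases eq_or_lt_of_le hy.1 with h | h
    · -- y = 0
      subst h
      simp only [Complex.ofReal_zero, zero_mul, fosc]
      rw [Complex.zero_cpow (by
        intro hc
        have : (γ : ℂ) = 1 := by linear_combination hc
        have : γ = 1 := by exact_mod_cast this
        exact hγ.2.ne this), Real.zero_rpow (by intro hc; linarith [hγ.2] : γ - 1 ≠ 0)]
      simp
    · exact fosc_imag γ hγ n h
  rw [smul_eq_mul, ← intervalIntegral.integral_const_mul, key,
    intervalIntegral.integral_const_mul, intervalIntegral.integral_ofReal]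

lemma left_tendsto (γ : ℝ) (hγ : γ ∈ Set.Ioo (0:ℝ) 1) (n : ℕ) (hn : 1 ≤ n) :
    Tendsto (fun R : ℝ => ∫ y in (0:ℝ)..R, y ^ (γ - 1) * Real.exp (-(n * y)))
      atTop (nhds ((1 / (n:ℝ)) ^ γ * Real.Gamma γ)) := by
  have hn' : (0:ℝ) < n := by exact_mod_cast hn
  have hint : IntegrableOn (fun y : ℝ => y ^ (γ - 1) * Real.exp (-(n * y))) (Set.Ioi 0) := by
    have := integrableOn_rpow_mul_exp_neg_mul_rpow (p := 1) (s := γ - 1) (b := n)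
      (by linarith [hγ.1]) zero_lt_one hn'
    refine this.congr_fun (fun x hx => ?_) measurableSet_Ioi
    dsimp only
    rw [Real.rpow_one, neg_mul]
  have := MeasureTheory.intervalIntegral_tendsto_integral_Ioi 0 hint tendsto_id
  rwa [Real.integral_rpow_mul_exp_neg_mul_Ioi hγ.1 hn'] at this

lemma top_bound (γ : ℝ) (hγ : γ ∈ Set.Ioo (0:ℝ) 1) (n : ℕ) {R : ℝ} (hR : 0 < R) :
    ‖∫ x in (0:ℝ)..π, fosc γ n (x + R * Complex.I)‖ ≤ R ^ (γ - 1) * π := by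
  have h := intervalIntegral.norm_integral_le_of_norm_le_const
    (C := R ^ (γ - 1)) (a := (0:ℝ)) (b := π)
    (f := fun x : ℝ => fosc γ n (x + R * Complex.I)) ?_
  · calc ‖∫ x in (0:ℝ)..π, fosc γ n (x + R * Complex.I)‖ ≤ R ^ (γ - 1) * |π - 0| := h
    _ = R ^ (γ - 1) * π := by rw [sub_zero, _root_.abs_of_nonneg Real.pi_pos.le]
  · intro x hx
    have hz : ((x : ℂ) + R * Complex.I) ≠ 0 := by
      intro h
      have : ((x : ℂ) + R * Complex.I).im = 0 := by rw [h]; simp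
      simp at this
      exact hR.ne' this
    rw [norm_fosc γ n hz]
    have him : ((x : ℂ) + R * Complex.I).im = R := by simp
    have habs : R ≤ ‖(x : ℂ) + R * Complex.I‖ := by
      calc R = |((x : ℂ) + R * Complex.I).im| := by rw [him, _root_.abs_of_pos hR]
      _ ≤ _ := Complex.abs_im_le_norm _
    calc ‖(x : ℂ) + R * Complex.I‖ ^ (γ - 1) *
          Real.exp (-(n * ((x : ℂ) + R * Complex.I).im))
        ≤ R ^ (γ - 1) * 1 := by
          apply mul_le_mul
          · exact Real.rpow_le_rpow_of_nonpos hR habs (by linarith [hγ.2])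
          · rw [Real.exp_le_one_iff, him]
            have : (0:ℝ) ≤ (n : ℝ) * R := mul_nonneg (Nat.cast_nonneg n) hR.le
            linarith
          · positivity
          · exact Real.rpow_nonneg hR.le _
      _ = R ^ (γ - 1) := mul_one _

lemma exp_integral_bound (n : ℕ) (hn : 1 ≤ n) {R : ℝ} (hR : 0 < R) :
    (∫ y in (0:ℝ)..R, Real.exp (-(n * y))) ≤ 1 / n := by
  have hn' : (0:ℝ) < n := by exact_mod_cast hn
  have hint : IntegrableOn (fun y : ℝ => Real.exp (-(n * y))) (Set.Ioi 0) := by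
    have := integrableOn_rpow_mul_exp_neg_mul_rpow (p := 1) (s := 0) (b := n)
      (by linarith) zero_lt_one hn'
    refine this.congr_fun (fun x hx => ?_) measurableSet_Ioi
    dsimp only
    rw [Real.rpow_one, Real.rpow_zero, one_mul, neg_mul]
  have hval : (∫ y in Set.Ioi (0:ℝ), Real.exp (-(n * y))) = 1 / n := by
    have := Real.integral_rpow_mul_exp_neg_mul_Ioi (a := 1) (r := n) one_pos hn'
    simp only [sub_self, Real.rpow_zero, one_mul, Real.rpow_one, Real.Gamma_one,
      mul_one] at this
    rw [this]
  rw [intervalIntegral.integral_of_le hR.le, ← hval]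
  apply setIntegral_mono_set hint
  · exact Filter.Eventually.of_forall (fun y => (Real.exp_pos _).le)
  · exact Filter.Eventually.of_forall (fun y hy => hy.1)

lemma side_bound (γ : ℝ) (hγ : γ ∈ Set.Ioo (0:ℝ) 1) (n : ℕ) (hn : 1 ≤ n) {R : ℝ} (hR : 0 < R) :
    ‖Complex.I • (∫ y in (0:ℝ)..R, fosc γ n (π + y * Complex.I))‖ ≤ π ^ (γ - 1) / n := by
  rw [norm_smul, Complex.norm_I, one_mul]
  have key : ‖∫ y in (0:ℝ)..R, fosc γ n (π + y * Complex.I)‖ ≤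
      |∫ y in (0:ℝ)..R, π ^ (γ - 1) * Real.exp (-(n * y))| := by
    apply intervalIntegral.norm_integral_le_abs_of_norm_le
    · filter_upwards [ae_restrict_mem measurableSet_uIoc] with y hy
      rw [Set.uIoc_of_le hR.le] at hy
      have hz : ((π : ℂ) + y * Complex.I) ≠ 0 := by
        intro h
        have : ((π : ℂ) + y * Complex.I).re = 0 := by rw [h]; simp
        simp at this
      rw [norm_fosc γ n hz]
      have him : ((π : ℂ) + y * Complex.I).im = y := by simp
      have habs : π ≤ ‖(π : ℂ) + y * Complex.I‖ := by
        calc π = |((π : ℂ) + y * Complex.I).re| := by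
              simp [_root_.abs_of_pos Real.pi_pos]
        _ ≤ _ := Complex.abs_re_le_norm _
      rw [him]
      apply mul_le_mul_of_nonneg_right _ (Real.exp_pos _).le
      exact Real.rpow_le_rpow_of_nonpos Real.pi_pos habs (by linarith [hγ.2])
    · apply IntervalIntegrable.const_mul
      exact (Real.continuous_exp.comp (continuous_const.mul continuous_id).neg).intervalIntegrable _ _
  refine key.trans ?_
  rw [intervalIntegral.integral_const_mul, _root_.abs_of_nonneg (mul_nonneg (Real.rpow_nonneg Real.pi_pos.le _)
    (intervalIntegral.integral_nonneg hR.le (fun y _ => (Real.exp_pos _).le))), div_eq_mul_one_div]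
  apply mul_le_mul_of_nonneg_left (exp_integral_bound n hn hR) (Real.rpow_nonneg Real.pi_pos.le _)

lemma key_bound (γ : ℝ) (hγ : γ ∈ Set.Ioo (0:ℝ) 1) (n : ℕ) (hn : 1 ≤ n) :
    ‖(∫ s in (0:ℝ)..π, fosc γ n s) -
        ((n : ℝ) ^ (-γ) : ℝ) * Complex.exp (Complex.I * π * γ / 2) * (Real.Gamma γ : ℂ)‖ ≤
      π ^ (γ - 1) / n := by
  set Λ : ℂ := ((n : ℝ) ^ (-γ) : ℝ) * Complex.exp (Complex.I * π * γ / 2) * (Real.Gamma γ : ℂ)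
    with hΛdef
  have hn' : (0:ℝ) < n := by exact_mod_cast hn
  have hΛ : Λ = Complex.exp (Complex.I * π * γ / 2) *
      (((1 / (n:ℝ)) ^ γ * Real.Gamma γ : ℝ) : ℂ) := by
    rw [hΛdef]
    have : ((n:ℝ)) ^ (-γ) = (1 / (n:ℝ)) ^ γ := by
      rw [Real.rpow_neg (Nat.cast_nonneg n), one_div, Real.inv_rpow (Nat.cast_nonneg n)]
    rw [this]
    push_cast
    ring
  set B : ℂ := ∫ s in (0:ℝ)..π, fosc γ n s with hBdef
  -- limit of the left side integral
  have hL : Tendsto (fun R : ℝ => Complex.I • (∫ y in (0:ℝ)..R, fosc γ n (y * Complex.I)))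
      atTop (nhds Λ) := by
    have h1 : Tendsto (fun R : ℝ => Complex.exp (Complex.I * π * γ / 2) *
        ((∫ y in (0:ℝ)..R, y ^ (γ - 1) * Real.exp (-(n * y)) : ℝ) : ℂ)) atTop (nhds Λ) := by
      rw [hΛ]
      exact tendsto_const_nhds.mul
        ((Complex.continuous_ofReal.tendsto _).comp (left_tendsto γ hγ n hn))
    refine h1.congr' ?_
    filter_upwards [Filter.eventually_gt_atTop (0:ℝ)] with R hR
    exact (left_integral_eq γ hγ n hR).symm
  have hb : Tendsto (fun R : ℝ => R ^ (γ - 1) * π + π ^ (γ - 1) / n +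
      ‖Complex.I • (∫ y in (0:ℝ)..R, fosc γ n (y * Complex.I)) - Λ‖) atTop
      (nhds (π ^ (γ - 1) / n)) := by
    have h1 : Tendsto (fun R : ℝ => R ^ (γ - 1) * π) atTop (nhds 0) := by
      have := (tendsto_rpow_neg_atTop (y := 1 - γ) (by linarith [hγ.2])).mul_const π
      rw [zero_mul] at this
      refine this.congr (fun R => ?_)
      norm_num
    have h2 : Tendsto (fun R : ℝ =>
        ‖Complex.I • (∫ y in (0:ℝ)..R, fosc γ n (y * Complex.I)) - Λ‖) atTop (nhds 0) := by
      have := (hL.sub_const Λ).norm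
      rwa [sub_self, norm_zero] at this
    have := (h1.add (tendsto_const_nhds (x := π ^ (γ - 1) / (n:ℝ)))).add h2
    rwa [zero_add, add_zero] at this
  refine ge_of_tendsto hb ?_
  filter_upwards [Filter.eventually_gt_atTop (0:ℝ)] with R hR
  have hrect := rect_limit γ hγ n hR
  have hid : B - Λ = (∫ x in (0:ℝ)..π, fosc γ n (x + R * Complex.I)) -
      Complex.I • (∫ y in (0:ℝ)..R, fosc γ n (π + y * Complex.I)) +
      (Complex.I • (∫ y in (0:ℝ)..R, fosc γ n (y * Complex.I)) - Λ) := by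
    rw [hBdef]
    linear_combination hrect
  rw [hid]
  calc ‖(∫ x in (0:ℝ)..π, fosc γ n (x + R * Complex.I)) -
        Complex.I • (∫ y in (0:ℝ)..R, fosc γ n (π + y * Complex.I)) +
        (Complex.I • (∫ y in (0:ℝ)..R, fosc γ n (y * Complex.I)) - Λ)‖
      ≤ ‖(∫ x in (0:ℝ)..π, fosc γ n (x + R * Complex.I)) -
          Complex.I • (∫ y in (0:ℝ)..R, fosc γ n (π + y * Complex.I))‖ +
        ‖Complex.I • (∫ y in (0:ℝ)..R, fosc γ n (y * Complex.I)) - Λ‖ := norm_add_le _ _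
    _ ≤ (‖∫ x in (0:ℝ)..π, fosc γ n (x + R * Complex.I)‖ +
          ‖Complex.I • (∫ y in (0:ℝ)..R, fosc γ n (π + y * Complex.I))‖) +
        ‖Complex.I • (∫ y in (0:ℝ)..R, fosc γ n (y * Complex.I)) - Λ‖ := by
        gcongr
        exact norm_sub_le _ _
    _ ≤ (R ^ (γ - 1) * π + π ^ (γ - 1) / n) +
        ‖Complex.I • (∫ y in (0:ℝ)..R, fosc γ n (y * Complex.I)) - Λ‖ := by
        gcongr
        · exact top_bound γ hγ n hR
        · exact side_bound γ hγ n hn hR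
    _ = _ := by ring

/-- For `γ ∈ (0,1)` there is `C > 0` such that for every integer `n ≥ 1`,
`|∫_0^π s^{γ-1} e^{ins} ds - n^{-γ} e^{iπγ/2} Γ(γ)| ≤ C / n`. -/
theorem oscillatory_integral_asymptotics (γ : ℝ) (hγ : γ ∈ Set.Ioo (0 : ℝ) 1) :
    ∃ C : ℝ, 0 < C ∧ ∀ n : ℕ, 1 ≤ n →
      ‖(∫ s in (0 : ℝ)..π, (s : ℂ) ^ ((γ : ℂ) - 1) * Complex.exp (Complex.I * n * s)) -
          ((n : ℝ) ^ (-γ) : ℝ) * Complex.exp (Complex.I * π * γ / 2) * (Real.Gamma γ : ℂ)‖ ≤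
        C / n := by
  refine ⟨π ^ (γ - 1), Real.rpow_pos_of_pos Real.pi_pos _, fun n hn => ?_⟩
  simpa [fosc] using key_bound γ hγ n hn
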